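/- Let D ∈ E^k with embedding dimension 2 and k ≥ 4, let i < j, and suppose for some ε ≠ 0 with |ε| sufficiently small, D + ε E_{ij} ∈ E^k with embedding dimension at most 2. Then the centered configuration matrix P of D (PPᵀ = K†(D)) has all rows p_s, s ∉ {i, j}, equal to a single common point p ∈ ℝ²; consequently D_{st} = 0 for all s, t ∉ {i, j}. -/

import Mathlib

open Matrix BigOperators

noncomputable section

def unitMat {n : ℕ} (i j : Fin n) : Matrix (Fin n) (Fin n) ℝ :=
  Matrix.single i j 1 + Matrix.single j i 1

def Jmat (ι : Type*) [Fintype ι] [DecidableEq ι] : Matrix ι ι ℝ :=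
  (1 : Matrix ι ι ℝ) - (Fintype.card ι : ℝ)⁻¹ • Matrix.of (fun _ _ => (1 : ℝ))

def cKdag {ι : Type*} [Fintype ι] [DecidableEq ι] (D : Matrix ι ι ℝ) : Matrix ι ι ℝ :=
  (-(1 / 2 : ℝ)) • (Jmat ι * D * Jmat ι)

def IsEDMmat {ι : Type*} [Fintype ι] [DecidableEq ι] (D : Matrix ι ι ℝ) : Prop :=
  D.IsSymm ∧ (∀ i, D i i = 0) ∧ (cKdag D).PosSemidef

lemma Jmat_apply {k : ℕ} (a b : Fin k) :
    Jmat (Fin k) a b = (if a = b then 1 else 0) - (k : ℝ)⁻¹ := by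
  simp [Jmat, Matrix.one_apply]

lemma mulVec_J {k : ℕ} (v : Fin k → ℝ) :
    Jmat (Fin k) *ᵥ v = fun a => v a - (∑ b, v b) / k := by
  funext a
  simp only [Matrix.mulVec, dotProduct, Jmat_apply, sub_mul, ite_mul, one_mul, zero_mul,
    Finset.sum_sub_distrib, Finset.sum_ite_eq, Finset.mem_univ, if_true]
  rw [← Finset.mul_sum, div_eq_inv_mul]

lemma mulVec_unit {k : ℕ} (i j : Fin k) (v : Fin k → ℝ) :
    unitMat i j *ᵥ v = fun a => (if a = i then v j else 0) + (if a = j then v i else 0) := by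
  funext a
  simp only [unitMat, Matrix.mulVec, dotProduct, Matrix.add_apply,
    Matrix.single, Matrix.of_apply, add_mul, Finset.sum_add_distrib]
  congr 1
  · rw [Finset.sum_congr rfl (fun b _ => by
      by_cases h1 : i = a <;> by_cases h2 : j = b <;> simp [h1, h2, eq_comm] :
      ∀ b ∈ Finset.univ, (if i = a ∧ j = b then (1:ℝ) else 0) * v b
        = if a = i then (if b = j then v b else 0) else 0)]
    by_cases h : a = i <;> simp [h, Finset.sum_ite_eq]
  · rw [Finset.sum_congr rfl (fun b _ => by
      by_cases h1 : j = a <;> by_cases h2 : i = b <;> simp [h1, h2, eq_comm] :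
      ∀ b ∈ Finset.univ, (if j = a ∧ i = b then (1:ℝ) else 0) * v b
        = if a = j then (if b = i then v b else 0) else 0)]
    by_cases h : a = j <;> simp [h, Finset.sum_ite_eq]

lemma cKdag_add_smul {k : ℕ} (A B : Matrix (Fin k) (Fin k) ℝ) (c : ℝ) :
    cKdag (A + c • B) = cKdag A + c • cKdag B := by
  simp only [cKdag, Matrix.mul_add, Matrix.add_mul, Matrix.mul_smul, Matrix.smul_mul,
    smul_add, smul_smul]
  rw [mul_comm]

lemma mulVec_cKdag {k : ℕ} (A : Matrix (Fin k) (Fin k) ℝ) (v : Fin k → ℝ) :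
    cKdag A *ᵥ v = (-(1/2 : ℝ)) • (Jmat (Fin k) *ᵥ (A *ᵥ (Jmat (Fin k) *ᵥ v))) := by
  simp [cKdag, Matrix.smul_mulVec, Matrix.mulVec_mulVec, Matrix.neg_mulVec, Matrix.mul_assoc]

lemma mulL_J {k : ℕ} (A : Matrix (Fin k) (Fin k) ℝ) (s t : Fin k) :
    (Jmat (Fin k) * A) s t = A s t - (∑ a, A a t) / k := by
  rw [Matrix.mul_apply]
  simp only [Jmat_apply, sub_mul, ite_mul, one_mul, zero_mul, Finset.sum_sub_distrib,
    Finset.sum_ite_eq, Finset.mem_univ, if_true]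
  rw [← Finset.mul_sum, div_eq_inv_mul]

lemma mulR_J {k : ℕ} (A : Matrix (Fin k) (Fin k) ℝ) (s t : Fin k) :
    (A * Jmat (Fin k)) s t = A s t - (∑ b, A s b) / k := by
  rw [Matrix.mul_apply]
  simp only [Jmat_apply, mul_sub, mul_ite, mul_one, mul_zero, Finset.sum_sub_distrib,
    Finset.sum_ite_eq', Finset.mem_univ, if_true]
  rw [← Finset.sum_mul, div_eq_mul_inv]

lemma JDJ_entry {k : ℕ} (A : Matrix (Fin k) (Fin k) ℝ) (s t : Fin k) :
    (Jmat (Fin k) * A * Jmat (Fin k)) s t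
      = A s t - (∑ a, A a t) / k - (∑ b, A s b) / k + (∑ a, ∑ b, A a b) / (k * k) := by
  rw [mulR_J, mulL_J]
  rw [show ∑ b, (Jmat (Fin k) * A) s b = ∑ b, (A s b - (∑ a, A a b) / k) from
    Finset.sum_congr rfl fun b _ => mulL_J A s b]
  rw [Finset.sum_sub_distrib, ← Finset.sum_div, Finset.sum_comm, sub_div, div_div]
  ring

lemma key_DK {k : ℕ} (D : Matrix (Fin k) (Fin k) ℝ) (hsymm : D.IsSymm)
    (hdiag : ∀ a, D a a = 0) (s t : Fin k) :
    D s t = cKdag D s s + cKdag D t t - 2 * cKdag D s t := by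
  have hrow : ∀ x : Fin k, ∑ a, D a x = ∑ b, D x b :=
    fun x => Finset.sum_congr rfl fun a _ => hsymm.apply x a
  simp only [cKdag, Matrix.smul_apply, smul_eq_mul, JDJ_entry]
  rw [hdiag s, hdiag t, hrow s, hrow t]
  ring

/-- The `d = 2` case: if `D` has embedding dimension `2` and `D + ε E_{ij}`
stays an EDM of embedding dimension at most `2` for all sufficiently small
`ε ≠ 0`, then all points other than `i` and `j` coincide, so `D_{st} = 0` for
all `s, t ∉ {i, j}`. -/
theorem yielding_dim_two (k : ℕ) (hk : 4 ≤ k)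
    (D : Matrix (Fin k) (Fin k) ℝ) (hD : IsEDMmat D)
    (hrank : (cKdag D).rank = 2)
    (i j : Fin k) (hij : i < j)
    (hyield : ∃ δ > (0 : ℝ), ∀ ε : ℝ, ε ≠ 0 → |ε| < δ →
      IsEDMmat (D + ε • unitMat i j) ∧ (cKdag (D + ε • unitMat i j)).rank ≤ 2) :
    (∀ P : Matrix (Fin k) (Fin 2) ℝ, P * Pᵀ = cKdag D →
      ∃ p : Fin 2 → ℝ, ∀ s : Fin k, s ≠ i → s ≠ j → (fun t => P s t) = p) ∧
    (∀ s t : Fin k, s ≠ i → s ≠ j → t ≠ i → t ≠ j → D s t = 0) := by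
  classical
  have hijne : i ≠ j := Fin.ne_of_lt hij
  have hk0 : (k : ℝ) ≠ 0 := Nat.cast_ne_zero.mpr (by omega)
  obtain ⟨δ, hδ, hy⟩ := hyield
  set K := cKdag D with hKdef
  set M := cKdag (unitMat i j) with hMdef
  -- a point outside {i, j}
  obtain ⟨s₀, hs₀⟩ : ((Finset.univ : Finset (Fin k)) \ {i, j}).Nonempty := by
    rw [← Finset.card_pos, Finset.card_sdiff_of_subset (Finset.subset_univ _), Finset.card_univ,
      Fintype.card_fin]
    have h2 : ({i, j} : Finset (Fin k)).card ≤ 2 := by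
      refine le_trans (Finset.card_insert_le _ _) ?_
      simp
    omega
  rw [Finset.mem_sdiff, Finset.mem_insert, Finset.mem_singleton] at hs₀
  have hs₀i : s₀ ≠ i := fun h => hs₀.2 (Or.inl h)
  have hs₀j : s₀ ≠ j := fun h => hs₀.2 (Or.inr h)
  -- ker K ⊆ ker M
  have hkerKM : ∀ v : Fin k → ℝ, K *ᵥ v = 0 → M *ᵥ v = 0 := by
    intro v hv
    set ε := δ / 2 with hεd
    have hεpos : 0 < ε := by positivity
    have habs : |ε| < δ := by rw [abs_of_pos hεpos]; linarith
    have habs' : |(-ε)| < δ := by rw [abs_neg]; exact habs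
    have h1 := hy ε hεpos.ne' habs
    have h2 := hy (-ε) (neg_ne_zero.mpr hεpos.ne') habs'
    have e1 : cKdag (D + ε • unitMat i j) = K + ε • M := cKdag_add_smul D (unitMat i j) ε
    have e2 : cKdag (D + (-ε) • unitMat i j) = K + (-ε) • M := cKdag_add_smul D (unitMat i j) (-ε)
    have p1 : (K + ε • M).PosSemidef := e1 ▸ h1.1.2.2
    have p2 : (K + (-ε) • M).PosSemidef := e2 ▸ h2.1.2.2
    set q := v ⬝ᵥ M *ᵥ v with hq
    have key : ∀ (c : ℝ), (K + c • M).PosSemidef → 0 ≤ c * q := by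
      intro c pc
      have := pc.dotProduct_mulVec_nonneg v
      rwa [star_trivial, Matrix.add_mulVec, hv, zero_add, Matrix.smul_mulVec,
        dotProduct_smul, smul_eq_mul] at this
    have q1 := key ε p1
    have q2 := key (-ε) p2
    have hq0 : q = 0 := by nlinarith
    have hzero : (K + ε • M) *ᵥ v = 0 := by
      apply (p1.dotProduct_mulVec_zero_iff v).mp
      rw [star_trivial, Matrix.add_mulVec, hv, zero_add, Matrix.smul_mulVec,
        dotProduct_smul, smul_eq_mul, ← hq, hq0, mul_zero]
    rw [Matrix.add_mulVec, hv, zero_add, Matrix.smul_mulVec] at hzero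
    exact (smul_eq_zero.mp hzero).resolve_left hεpos.ne'
  -- difference vectors
  set vd : Fin k → Fin k → (Fin k → ℝ) :=
    fun s t b => (if b = s then 1 else 0) - (if b = t then 1 else 0) with hvd
  have hsum : ∀ s t, ∑ b, vd s t b = 0 := by
    intro s t
    simp [hvd, Finset.sum_sub_distrib]
  have hJvd : ∀ s t, Jmat (Fin k) *ᵥ vd s t = vd s t := by
    intro s t
    rw [mulVec_J]
    funext a
    rw [hsum s t]
    simp
  have hMvd : ∀ s t : Fin k, s ≠ i → s ≠ j → t ≠ i → t ≠ j → M *ᵥ vd s t = 0 := by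
    intro s t hsi hsj hti htj
    rw [hMdef, mulVec_cKdag, hJvd, mulVec_unit]
    have hz : (fun a => (if a = i then vd s t j else 0) + (if a = j then vd s t i else 0))
        = (0 : Fin k → ℝ) := by
      funext a
      have h1 : vd s t j = 0 := by simp [hvd, Ne.symm hsj, Ne.symm htj]
      have h2 : vd s t i = 0 := by simp [hvd, Ne.symm hsi, Ne.symm hti]
      simp [h1, h2]
    rw [hz, Matrix.mulVec_zero, smul_zero]
  -- dimension count for K
  have hfinK : 2 + Module.finrank ℝ (LinearMap.ker K.mulVecLin) = k := by
    have h := LinearMap.finrank_range_add_finrank_ker K.mulVecLin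
    rw [Module.finrank_pi ℝ, Fintype.card_fin] at h
    have hr : Module.finrank ℝ (LinearMap.range K.mulVecLin) = 2 := hrank
    rw [hr] at h
    exact h
  -- the 2 × k comparison matrix
  set G : Matrix (Fin 2) (Fin k) ℝ :=
    Matrix.of (fun r b => (if b = (if r = 0 then i else j) then 1 else 0) - (k : ℝ)⁻¹) with hG
  have hGv : ∀ (v : Fin k → ℝ) (r : Fin 2),
      G.mulVecLin v r = v (if r = 0 then i else j) - (∑ b, v b) / k := by
    intro v r
    simp only [Matrix.mulVecLin_apply, Matrix.mulVec, dotProduct, hG, Matrix.of_apply,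
      sub_mul, ite_mul, one_mul, zero_mul, Finset.sum_sub_distrib, Finset.sum_ite_eq,
      Finset.sum_ite_eq', Finset.mem_univ, if_true]
    rw [← Finset.mul_sum, div_eq_inv_mul]
  have hGsurj : LinearMap.range G.mulVecLin = ⊤ := by
    rw [LinearMap.range_eq_top]
    intro z
    set x₁ : Fin k → ℝ := fun b =>
      (if b = i then 1 else 0) + (if b = j then 1 else 0) - 2 * (if b = s₀ then 1 else 0) with hx₁
    set x₂ : Fin k → ℝ := vd i j with hx₂
    have hsx₁ : ∑ b, x₁ b = 0 := by
      simp [hx₁, Finset.sum_sub_distrib, Finset.sum_add_distrib, ← Finset.mul_sum]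
      ring
    have hgx₁ : ∀ r, G.mulVecLin x₁ r = 1 := by
      intro r
      rw [hGv, hsx₁]
      fin_cases r <;> simp [hx₁, hijne, Ne.symm hijne, Ne.symm hs₀i, Ne.symm hs₀j]
    have hgx₂ : ∀ r, G.mulVecLin x₂ r = if r = 0 then 1 else -1 := by
      intro r
      rw [hGv, hx₂, hsum i j]
      fin_cases r <;> simp [hvd, hijne, Ne.symm hijne]
    refine ⟨((z 0 + z 1) / 2) • x₁ + ((z 0 - z 1) / 2) • x₂, ?_⟩
    funext r
    rw [map_add]
    simp only [_root_.map_smul, Pi.add_apply, Pi.smul_apply, smul_eq_mul, hgx₁ r, hgx₂ r]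
    fin_cases r <;> simp <;> ring
  have hfinG : Module.finrank ℝ (LinearMap.ker G.mulVecLin) + 2 = k := by
    have h := LinearMap.finrank_range_add_finrank_ker G.mulVecLin
    rw [Module.finrank_pi ℝ, Fintype.card_fin, hGsurj, finrank_top, Module.finrank_pi ℝ,
      Fintype.card_fin] at h
    omega
  have hkerMG : LinearMap.ker M.mulVecLin ≤ LinearMap.ker G.mulVecLin := by
    intro v hv
    rw [LinearMap.mem_ker, Matrix.mulVecLin_apply] at hv
    rw [hMdef, mulVec_cKdag] at hv
    set y := Jmat (Fin k) *ᵥ v with hy'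
    set z := unitMat i j *ᵥ y with hz'
    have hv2 : Jmat (Fin k) *ᵥ z = 0 := by
      rcases smul_eq_zero.mp hv with h | h
      · norm_num at h
      · exact h
    have hzform : z = fun a => (if a = i then y j else 0) + (if a = j then y i else 0) :=
      mulVec_unit i j y
    have hsz : ∑ a, z a = y j + y i := by
      rw [hzform]
      simp [Finset.sum_add_distrib, hijne]
    have hJz : ∀ a, z a - (∑ b, z b) / k = 0 := by
      intro a
      have := congrFun hv2 a
      rwa [mulVec_J] at this
    have hys : y j + y i = 0 := by
      have h := hJz s₀
      rw [hsz, hzform] at h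
      simp only [if_neg hs₀i, if_neg hs₀j, add_zero, zero_sub, neg_eq_zero,
        div_eq_zero_iff] at h
      rcases h with h | h
      · exact h
      · exact absurd h hk0
    have hyj : y j = 0 := by
      have h := hJz i
      rw [hsz, hzform] at h
      simp only [if_pos rfl, if_neg hijne, add_zero] at h
      rw [hys] at h
      simpa using h
    have hyi : y i = 0 := by linarith
    rw [LinearMap.mem_ker]
    funext r
    rw [Matrix.mulVecLin_apply] at *
    rw [show (G *ᵥ v) r = G.mulVecLin v r from rfl, hGv]
    have hyform : ∀ a : Fin k, y a = v a - (∑ b, v b) / k := by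
      intro a
      rw [hy', mulVec_J]
    rw [← hyform (if r = 0 then i else j)]
    by_cases hr : r = 0 <;> simp [hr, hyi, hyj]
  -- equality of kernels
  have hkerfin : LinearMap.ker K.mulVecLin = LinearMap.ker M.mulVecLin := by
    have hle : LinearMap.ker K.mulVecLin ≤ LinearMap.ker M.mulVecLin := by
      intro v hv
      rw [LinearMap.mem_ker, Matrix.mulVecLin_apply] at hv ⊢
      exact hkerKM v hv
    refine Submodule.eq_of_le_of_finrank_le hle ?_
    have h1 : Module.finrank ℝ (LinearMap.ker M.mulVecLin)
        ≤ Module.finrank ℝ (LinearMap.ker G.mulVecLin) := Submodule.finrank_mono hkerMG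
    omega
  have hKvd : ∀ s t : Fin k, s ≠ i → s ≠ j → t ≠ i → t ≠ j → K *ᵥ vd s t = 0 := by
    intro s t hsi hsj hti htj
    have hm : vd s t ∈ LinearMap.ker M.mulVecLin := by
      rw [LinearMap.mem_ker, Matrix.mulVecLin_apply]
      exact hMvd s t hsi hsj hti htj
    rw [← hkerfin, LinearMap.mem_ker, Matrix.mulVecLin_apply] at hm
    exact hm
  have hKcols : ∀ (a s t : Fin k), s ≠ i → s ≠ j → t ≠ i → t ≠ j → K a s = K a t := by
    intro a s t hsi hsj hti htj
    have h := congrFun (hKvd s t hsi hsj hti htj) a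
    simp only [Matrix.mulVec, dotProduct, hvd, mul_sub, mul_ite, mul_one, mul_zero,
      Finset.sum_sub_distrib, Finset.sum_ite_eq', Finset.mem_univ, if_true, Pi.zero_apply] at h
    linarith
  have hKsymm : ∀ a b : Fin k, K a b = K b a := by
    intro a b
    have h2 := congrFun (congrFun hD.2.2.1 a) b
    simp only [Matrix.conjTranspose_apply, star_trivial] at h2
    exact h2.symm
  constructor
  · intro P hP
    refine ⟨fun c => P s₀ c, ?_⟩
    intro s hsi hsj
    funext c
    have h0 : K *ᵥ vd s s₀ = 0 := hKvd s s₀ hsi hsj hs₀i hs₀j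
    have h1 : (Pᵀ *ᵥ vd s s₀) ⬝ᵥ (Pᵀ *ᵥ vd s s₀) = 0 := by
      rw [Matrix.dotProduct_mulVec, Matrix.vecMul_transpose, Matrix.mulVec_mulVec, hP, h0,
        zero_dotProduct]
    have h2 : Pᵀ *ᵥ vd s s₀ = 0 := dotProduct_self_eq_zero.mp h1
    have h3 := congrFun h2 c
    simp only [Matrix.mulVec, dotProduct, Matrix.transpose_apply, hvd, mul_sub, mul_ite, mul_one,
      mul_zero, Finset.sum_sub_distrib, Finset.sum_ite_eq', Finset.mem_univ, if_true,
      Pi.zero_apply] at h3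
    linarith
  · intro s t hsi hsj hti htj
    have hDK := key_DK D hD.1 hD.2.1 s t
    have h1 := hKcols s s t hsi hsj hti htj
    have h2 := hKcols t t s hti htj hsi hsj
    have h3 := hKsymm s t
    rw [hDK]
    linarith
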